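/- Let (G,m,w,B) be a connected weighted finite graph with boundary. Suppose (G,m,w) satisfies the Bakry–Émery curvature-dimension condition CD(K,n) with K > 0 and n > 1, i.e., Γ₂(f,f)(x) ≥ (1/n)(Δf(x))² + K·Γ(f,f)(x) for every f : V → ℝ and every x ∈ V. Then σ₂ ≥ nK/(n−1). -/

import Mathlib

open Finset Real

namespace GraphSteklov

variable {V : Type*} [Fintype V] [DecidableEq V]

/-- The weighted graph Laplacian: `Δu(x) = (1/m_x) Σ_y (u(y)-u(x)) w_{xy}`. -/
noncomputable def lap (m : V → ℝ) (w : V → V → ℝ) (u : V → ℝ) (x : V) : ℝ :=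
  (1 / m x) * ∑ y, (u y - u x) * w x y

/-- Weighted inner product of two functions over a finite set `S` of vertices:
`⟨u,v⟩_S = Σ_{x ∈ S} u(x) v(x) m_x`. -/
def iprodOn (m : V → ℝ) (S : Finset V) (u v : V → ℝ) : ℝ :=
  ∑ x ∈ S, u x * v x * m x

/-- Full weighted inner product `⟨u,v⟩ = Σ_{x ∈ V} u(x) v(x) m_x`. -/
def iprod (m : V → ℝ) (u v : V → ℝ) : ℝ := ∑ x, u x * v x * m x

/-- `(G,m,w)` is a weighted graph: positive vertex measure, symmetric edge weight,
positive exactly on edges. -/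
def IsWeight (G : SimpleGraph V) (m : V → ℝ) (w : V → V → ℝ) : Prop :=
  (∀ x, 0 < m x) ∧ (∀ x y, w x y = w y x) ∧
  (∀ x y, G.Adj x y → 0 < w x y) ∧ (∀ x y, ¬ G.Adj x y → w x y = 0)

/-- `B` is a vertex-boundary of `G`: no two boundary vertices are adjacent, and every
boundary vertex is adjacent to some interior vertex. -/
def IsBoundary (G : SimpleGraph V) (B : Finset V) : Prop :=
  (∀ x ∈ B, ∀ y ∈ B, ¬ G.Adj x y) ∧ (∀ x ∈ B, ∃ y, y ∉ B ∧ G.Adj x y)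

/-- `μ` is the nondecreasing sequence of eigenvalues (with multiplicity) of `-Δ`,
witnessed by an orthonormal (w.r.t. the measure `m`) basis of eigenfunctions. -/
def IsLapSpectrum (m : V → ℝ) (w : V → V → ℝ) (μ : Fin (Fintype.card V) → ℝ) : Prop :=
  Monotone μ ∧ ∃ v : Fin (Fintype.card V) → V → ℝ,
    (∀ i x, - lap m w (v i) x = μ i * v i x) ∧
    (∀ i j, iprod m (v i) (v j) = if i = j then 1 else 0)

/-- `σ` is the nondecreasing sequence of Steklov eigenvalues (with multiplicity) of
the Dirichlet-to-Neumann map of `(G,m,w,B)`: it is witnessed by a family of functions,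
harmonic in the interior, whose restrictions to `B` are orthonormal w.r.t. `⟨·,·⟩_B`
and whose normal derivatives `∂u/∂n = -Δu` on `B` satisfy the eigenvalue equations. -/
def IsSteklovSpectrum (m : V → ℝ) (w : V → V → ℝ) (B : Finset V)
    (σ : Fin B.card → ℝ) : Prop :=
  Monotone σ ∧ ∃ u : Fin B.card → V → ℝ,
    (∀ i y, y ∉ B → lap m w (u i) y = 0) ∧
    (∀ i x, x ∈ B → - lap m w (u i) x = σ i * u i x) ∧
    (∀ i j, iprodOn m B (u i) (u j) = if i = j then 1 else 0)

/-- `Mu2LB m w S c` says that the second smallest Laplacian eigenvalue `μ₂` of the induced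
weighted graph on `S` is `≥ c`, expressed via the variational characterization
`μ₂(S) = min { ⟨du,du⟩_S / ⟨u,u⟩_S : u ≠ 0, ⟨u,1⟩_S = 0 }`. -/
def Mu2LB (m : V → ℝ) (w : V → V → ℝ) (S : Finset V) (c : ℝ) : Prop :=
  ∀ u : V → ℝ, (∑ y ∈ S, u y * m y) = 0 →
    c * (∑ y ∈ S, u y ^ 2 * m y) ≤ (1 / 2) * ∑ x ∈ S, ∑ y ∈ S, (u y - u x) ^ 2 * w x y

/-- The carré du champ operator `Γ(f,g) = ½(Δ(fg) - fΔg - gΔf)`. -/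
noncomputable def gammaOp (m : V → ℝ) (w : V → V → ℝ) (f g : V → ℝ) (x : V) : ℝ :=
  (lap m w (f * g) x - f x * lap m w g x - g x * lap m w f x) / 2

/-- The iterated carré du champ operator `Γ₂(f,f) = ½ΔΓ(f,f) - Γ(f,Δf)`. -/
noncomputable def gamma2Op (m : V → ℝ) (w : V → V → ℝ) (f : V → ℝ) (x : V) : ℝ :=
  (lap m w (gammaOp m w f f) x) / 2 - gammaOp m w f (lap m w f) x

/-- Edge connectivity: the least number of edges whose deletion disconnects `G`. -/
noncomputable def edgeConn (G : SimpleGraph V) : ℕ :=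
  sInf {n | ∃ F : Finset (Sym2 V), ↑F ⊆ G.edgeSet ∧ F.card = n ∧
    ¬ (G.deleteEdges ↑F).Connected}

/-- Vertex connectivity: the least number of vertices whose deletion disconnects `G`
(with the convention `v(K_n) = n - 1`, realized by allowing deletions leaving at most
one vertex). -/
noncomputable def vertConn (G : SimpleGraph V) : ℕ :=
  sInf {n | ∃ S : Finset V, S.card = n ∧
    (¬ (G.induce (↑(Sᶜ : Finset V) : Set V)).Connected ∨ (Sᶜ : Finset V).card ≤ 1)}

/-- Edge weights of the weighted path on `Fin n` (vertices `0,…,n-1`), where all edges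
have weight `1` except the edge incident to the vertex `0`, which has weight `lam`. -/
def pathW (lam : ℝ) {n : ℕ} (a b : Fin n) : ℝ :=
  if a.val + 1 = b.val ∨ b.val + 1 = a.val then
    (if a.val = 0 ∨ b.val = 0 then lam else 1) else 0

/-- The Laplacian (with unit vertex measure) of the weighted path `pathW lam`. -/
noncomputable def pathLap (lam : ℝ) {n : ℕ} (u : Fin n → ℝ) (a : Fin n) : ℝ :=
  ∑ b, (u b - u a) * pathW lam a b

/-- The largest Laplacian eigenvalue of the path `P_i` on `i` vertices with unit weight. -/
noncomputable def pathTopEig (i : ℕ) : ℝ :=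
  sSup {r | ∃ u : Fin i → ℝ, u ≠ 0 ∧ ∀ a, - pathLap 1 u a = r * u a}

/-- `𝒫(k,λ)`: the first Dirichlet eigenvalue of the path with vertices `0,1,…,k`, unit
vertex measure, edge weights `w_{01} = λ` and `w_{j,j+1} = 1` for `j ≥ 1`, and boundary
vertex `0`: the smallest eigenvalue of `-Δ` on functions vanishing at `0`. -/
noncomputable def pathDirichlet (k : ℕ) (lam : ℝ) : ℝ :=
  sInf {r | ∃ u : Fin (k + 1) → ℝ, u ≠ 0 ∧ u 0 = 0 ∧
    ∀ a : Fin (k + 1), a.val ≠ 0 → - pathLap lam u a = r * u a}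

/-- Lichnerowicz-type estimate: if `(G,m,w)` satisfies the Bakry–Émery
curvature-dimension condition `CD(K,n)` with `K > 0` and `n > 1`, then
`σ₂ ≥ nK/(n-1)`. -/
lemma lap_mul (m : V → ℝ) (w : V → V → ℝ) (hm : ∀ x, 0 < m x) (g : V → ℝ) (x : V) :
    lap m w g x * m x = ∑ y, (g y - g x) * w x y := by
  unfold lap
  field_simp
  exact mul_div_cancel_left₀ _ (hm x).ne'

lemma sum_lap (m : V → ℝ) (w : V → V → ℝ) (hm : ∀ x, 0 < m x)
    (hsym : ∀ x y, w x y = w y x) (g : V → ℝ) :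
    ∑ x, lap m w g x * m x = 0 := by
  simp only [lap_mul m w hm]
  have h : (∑ x, ∑ y, (g y - g x) * w x y) = -(∑ x, ∑ y, (g y - g x) * w x y) := by
    calc (∑ x, ∑ y, (g y - g x) * w x y)
        = ∑ y, ∑ x, (g y - g x) * w x y := Finset.sum_comm
      _ = ∑ x, ∑ y, (g x - g y) * w y x := rfl
      _ = ∑ x, ∑ y, -((g y - g x) * w x y) := by
          refine Finset.sum_congr rfl fun x _ => Finset.sum_congr rfl fun y _ => ?_
          rw [hsym y x]; ring
      _ = -(∑ x, ∑ y, (g y - g x) * w x y) := by simp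
  linarith

lemma iprod_lap (m : V → ℝ) (w : V → V → ℝ) (hm : ∀ x, 0 < m x)
    (hsym : ∀ x y, w x y = w y x) (f g : V → ℝ) :
    ∑ x, f x * lap m w g x * m x
      = -(1/2) * ∑ x, ∑ y, (f y - f x) * (g y - g x) * w x y := by
  have h1 : ∀ x : V, f x * lap m w g x * m x = ∑ y, f x * ((g y - g x) * w x y) := by
    intro x
    rw [mul_assoc, lap_mul m w hm, Finset.mul_sum]
  rw [Finset.sum_congr rfl fun x _ => h1 x]
  have hP' : (∑ x, ∑ y, f x * ((g y - g x) * w x y))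
      = ∑ x, ∑ y, f y * ((g x - g y) * w x y) := by
    calc (∑ x, ∑ y, f x * ((g y - g x) * w x y))
        = ∑ y, ∑ x, f x * ((g y - g x) * w x y) := Finset.sum_comm
      _ = ∑ x, ∑ y, f y * ((g x - g y) * w y x) := rfl
      _ = ∑ x, ∑ y, f y * ((g x - g y) * w x y) := by
          refine Finset.sum_congr rfl fun x _ => Finset.sum_congr rfl fun y _ => ?_
          rw [hsym y x]
  have hsum : (∑ x, ∑ y, f x * ((g y - g x) * w x y))
      + (∑ x, ∑ y, f y * ((g x - g y) * w x y))
      = ∑ x, ∑ y, -((f y - f x) * (g y - g x) * w x y) := by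
    rw [← Finset.sum_add_distrib]
    refine Finset.sum_congr rfl fun x _ => ?_
    rw [← Finset.sum_add_distrib]
    refine Finset.sum_congr rfl fun y _ => ?_
    ring
  have hneg : (∑ x, ∑ y, -((f y - f x) * (g y - g x) * w x y))
      = -(∑ x, ∑ y, (f y - f x) * (g y - g x) * w x y) := by simp
  linarith [hP', hsum, hneg]

lemma sum_gamma (m : V → ℝ) (w : V → V → ℝ) (hm : ∀ x, 0 < m x)
    (hsym : ∀ x y, w x y = w y x) (f g : V → ℝ) :
    ∑ x, gammaOp m w f g x * m x
      = (1/2) * ∑ x, ∑ y, (f y - f x) * (g y - g x) * w x y := by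
  have e1 := sum_lap m w hm hsym (f * g)
  have e2 := iprod_lap m w hm hsym f g
  have e3 := iprod_lap m w hm hsym g f
  have hDcomm : (∑ x, ∑ y, (g y - g x) * (f y - f x) * w x y)
      = ∑ x, ∑ y, (f y - f x) * (g y - g x) * w x y := by
    refine Finset.sum_congr rfl fun x _ => Finset.sum_congr rfl fun y _ => ?_
    ring
  have e4 : ∑ x, gammaOp m w f g x * m x
      = (∑ x, lap m w (f * g) x * m x) / 2 - (∑ x, f x * lap m w g x * m x) / 2
        - (∑ x, g x * lap m w f x * m x) / 2 := by
    rw [Finset.sum_div, Finset.sum_div, Finset.sum_div, ← Finset.sum_sub_distrib,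
      ← Finset.sum_sub_distrib]
    refine Finset.sum_congr rfl fun x _ => ?_
    simp only [gammaOp]; ring
  rw [e4, e1, e2, e3, hDcomm]
  ring

lemma sum_gamma2 (m : V → ℝ) (w : V → V → ℝ) (hm : ∀ x, 0 < m x)
    (hsym : ∀ x y, w x y = w y x) (f : V → ℝ) :
    ∑ x, gamma2Op m w f x * m x = ∑ x, (lap m w f x) ^ 2 * m x := by
  have h1 := sum_lap m w hm hsym (gammaOp m w f f)
  have h2 := sum_gamma m w hm hsym f (lap m w f)
  have h3 := iprod_lap m w hm hsym (lap m w f) f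
  have hDcomm : (∑ x, ∑ y, (lap m w f y - lap m w f x) * (f y - f x) * w x y)
      = ∑ x, ∑ y, (f y - f x) * (lap m w f y - lap m w f x) * w x y := by
    refine Finset.sum_congr rfl fun x _ => Finset.sum_congr rfl fun y _ => ?_
    ring
  have hsq : (∑ x, lap m w f x * lap m w f x * m x) = ∑ x, (lap m w f x) ^ 2 * m x := by
    refine Finset.sum_congr rfl fun x _ => ?_; ring
  have e4 : ∑ x, gamma2Op m w f x * m x
      = (∑ x, lap m w (gammaOp m w f f) x * m x) / 2
        - ∑ x, gammaOp m w f (lap m w f) x * m x := by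
    rw [Finset.sum_div, ← Finset.sum_sub_distrib]
    refine Finset.sum_congr rfl fun x _ => ?_
    simp only [gamma2Op]; ring
  rw [e4, h1, h2]
  rw [hDcomm] at h3
  linarith [hsq, h3]

lemma const_of_local {G : SimpleGraph V} (hG : G.Connected) {g : V → ℝ}
    (h : ∀ a b, G.Adj a b → g a = g b) (x y : V) : g x = g y := by
  obtain ⟨p⟩ := hG.preconnected x y
  induction p with
  | nil => rfl
  | cons ha _ ih => exact (h _ _ ha).trans ih

theorem lichnerowicz_bakry_emery
    {V : Type*} [Fintype V] [DecidableEq V]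
    (G : SimpleGraph V) (m : V → ℝ) (w : V → V → ℝ) (B : Finset V)
    (hG : G.Connected) (hW : IsWeight G m w) (hB : IsBoundary G B)
    (K n : ℝ) (hK : 0 < K) (hn : 1 < n)
    (hCD : ∀ f : V → ℝ, ∀ x : V,
      (1 / n) * (lap m w f x) ^ 2 + K * gammaOp m w f f x ≤ gamma2Op m w f x)
    (σ : Fin B.card → ℝ) (hσ : IsSteklovSpectrum m w B σ)
    (hB2 : 1 < B.card) :
    n * K / (n - 1) ≤ σ ⟨1, hB2⟩ := by
  obtain ⟨hm, hsym, hposw, hzerow⟩ := hW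
  obtain ⟨hmono, u, hharm, heig, horth⟩ := hσ
  have hwnn : ∀ x y, 0 ≤ w x y := by
    intro x y
    by_cases h : G.Adj x y
    · exact (hposw x y h).le
    · rw [hzerow x y h]
  have h0B : 0 < B.card := Nat.lt_trans Nat.one_pos hB2
  set i1 : Fin B.card := ⟨1, hB2⟩ with hi1def
  set i0 : Fin B.card := ⟨0, h0B⟩ with hi0def
  have hlapB : ∀ (i : Fin B.card) (x : V),
      lap m w (u i) x = if x ∈ B then -(σ i * u i x) else 0 := by
    intro i x
    by_cases hx : x ∈ B
    · rw [if_pos hx]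
      have := heig i x hx
      linarith
    · rw [if_neg hx]
      exact hharm i x hx
  have normB : ∀ i, ∑ x ∈ B, u i x * u i x * m x = 1 := by
    intro i
    have := horth i i
    simpa [iprodOn] using this
  have hA : ∀ i, ∑ x, (lap m w (u i) x) ^ 2 * m x = (σ i) ^ 2 := by
    intro i
    rw [← Finset.sum_add_sum_compl B]
    have h1 : ∑ x ∈ B, (lap m w (u i) x) ^ 2 * m x
        = (σ i) ^ 2 * ∑ x ∈ B, u i x * u i x * m x := by
      rw [Finset.mul_sum]
      refine Finset.sum_congr rfl fun x hx => ?_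
      rw [hlapB i x, if_pos hx]; ring
    have h2 : ∑ x ∈ Bᶜ, (lap m w (u i) x) ^ 2 * m x = 0 := by
      apply Finset.sum_eq_zero
      intro x hx
      rw [hlapB i x, if_neg (Finset.mem_compl.mp hx)]; ring
    rw [h1, h2, normB i]; ring
  have hE : ∀ i, ∑ x, u i x * lap m w (u i) x * m x = -(σ i) := by
    intro i
    rw [← Finset.sum_add_sum_compl B]
    have h1 : ∑ x ∈ B, u i x * lap m w (u i) x * m x
        = -(σ i) * ∑ x ∈ B, u i x * u i x * m x := by
      rw [Finset.mul_sum]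
      refine Finset.sum_congr rfl fun x hx => ?_
      rw [hlapB i x, if_pos hx]; ring
    have h2 : ∑ x ∈ Bᶜ, u i x * lap m w (u i) x * m x = 0 := by
      apply Finset.sum_eq_zero
      intro x hx
      rw [hlapB i x, if_neg (Finset.mem_compl.mp hx)]; ring
    rw [h1, h2, normB i]; ring
  have hGam : ∀ i, ∑ x, gammaOp m w (u i) (u i) x * m x = σ i := by
    intro i
    have h := sum_gamma m w hm hsym (u i) (u i)
    have h2 := iprod_lap m w hm hsym (u i) (u i)
    linarith [hE i]
  have hDnn : ∀ f : V → ℝ, 0 ≤ ∑ x, ∑ y, (f y - f x) * (f y - f x) * w x y := by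
    intro f
    refine Finset.sum_nonneg fun x _ => Finset.sum_nonneg fun y _ => ?_
    have h : (f y - f x) * (f y - f x) * w x y = (f y - f x) ^ 2 * w x y := by ring
    rw [h]
    exact mul_nonneg (sq_nonneg _) (hwnn x y)
  have hsig_nn : ∀ i, 0 ≤ σ i := by
    intro i
    linarith [hGam i, sum_gamma m w hm hsym (u i) (u i), hDnn (u i)]
  have hconst : ∀ i, σ i = 0 → ∀ x y, u i x = u i y := by
    intro i hz
    have h := sum_gamma m w hm hsym (u i) (u i)
    have hD0 : ∑ x, ∑ y, (u i y - u i x) * (u i y - u i x) * w x y = 0 := by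
      linarith [hGam i]
    have hinn : ∀ x ∈ (Finset.univ : Finset V),
        0 ≤ ∑ y, (u i y - u i x) * (u i y - u i x) * w x y := by
      intro x _
      refine Finset.sum_nonneg fun y _ => ?_
      have h' : (u i y - u i x) * (u i y - u i x) * w x y
          = (u i y - u i x) ^ 2 * w x y := by ring
      rw [h']
      exact mul_nonneg (sq_nonneg _) (hwnn x y)
    have hpt : ∀ x ∈ (Finset.univ : Finset V),
        (∑ y, (u i y - u i x) * (u i y - u i x) * w x y) = 0 :=
      (Finset.sum_eq_zero_iff_of_nonneg hinn).mp hD0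
    have hpt2 : ∀ x y : V, (u i y - u i x) * (u i y - u i x) * w x y = 0 := by
      intro x y
      have hinn2 : ∀ y ∈ (Finset.univ : Finset V),
          0 ≤ (u i y - u i x) * (u i y - u i x) * w x y := by
        intro y _
        have h' : (u i y - u i x) * (u i y - u i x) * w x y
            = (u i y - u i x) ^ 2 * w x y := by ring
        rw [h']
        exact mul_nonneg (sq_nonneg _) (hwnn x y)
      exact (Finset.sum_eq_zero_iff_of_nonneg hinn2).mp
        (hpt x (Finset.mem_univ x)) y (Finset.mem_univ y)
    apply const_of_local hG
    intro a b hab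
    have h0 := hpt2 a b
    rcases mul_eq_zero.mp h0 with h' | h'
    · have := mul_self_eq_zero.mp h'
      linarith
    · exact absurd h' (hposw a b hab).ne'
  rcases eq_or_lt_of_le (hsig_nn i1) with hz | hσpos
  · exfalso
    have hσ1 : σ i1 = 0 := hz.symm
    have hσ0 : σ i0 = 0 := by
      have hle : i0 ≤ i1 := by
        rw [hi0def, hi1def]
        exact Fin.mk_le_mk.mpr (by norm_num)
      have := hmono hle
      have := hsig_nn i0
      linarith
    have hc1 := hconst i1 hσ1
    have hc0 := hconst i0 hσ0
    obtain ⟨b, hb⟩ := Finset.card_pos.mp h0B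
    set S := ∑ x ∈ B, m x with hSdef
    have e11 : u i1 b * u i1 b * S = 1 := by
      rw [hSdef, Finset.mul_sum]
      rw [Finset.sum_congr rfl fun x _ => by rw [hc1 b x]]
      exact normB i1
    have e00 : u i0 b * u i0 b * S = 1 := by
      rw [hSdef, Finset.mul_sum]
      rw [Finset.sum_congr rfl fun x _ => by rw [hc0 b x]]
      exact normB i0
    have hne : i0 ≠ i1 := by
      rw [hi0def, hi1def]
      intro h
      have := congrArg Fin.val h
      norm_num at this
    have e01 : u i0 b * u i1 b * S = 0 := by
      have horth01 : ∑ x ∈ B, u i0 x * u i1 x * m x = 0 := by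
        have := horth i0 i1
        rw [if_neg hne] at this
        simpa [iprodOn] using this
      rw [hSdef, Finset.mul_sum]
      rw [Finset.sum_congr rfl fun x _ => by rw [hc0 b x, hc1 b x]]
      exact horth01
    nlinarith [e00, e11, e01]
  · have hsum : ∑ x, ((1 / n) * (lap m w (u i1) x) ^ 2
        + K * gammaOp m w (u i1) (u i1) x) * m x
        ≤ ∑ x, gamma2Op m w (u i1) x * m x :=
      Finset.sum_le_sum fun x _ => mul_le_mul_of_nonneg_right (hCD (u i1) x) (hm x).le
    have hsplit : ∑ x, ((1 / n) * (lap m w (u i1) x) ^ 2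
        + K * gammaOp m w (u i1) (u i1) x) * m x
        = (1 / n) * (∑ x, (lap m w (u i1) x) ^ 2 * m x)
          + K * (∑ x, gammaOp m w (u i1) (u i1) x * m x) := by
      rw [Finset.mul_sum, Finset.mul_sum, ← Finset.sum_add_distrib]
      refine Finset.sum_congr rfl fun x _ => ?_
      ring
    rw [hsplit, hA i1, hGam i1, sum_gamma2 m w hm hsym (u i1), hA i1] at hsum
    have hn1 : 0 < n - 1 := by linarith
    rw [div_le_iff₀ hn1]
    have hn0 : (0:ℝ) < n := by linarith
    have h2 : n * ((1 / n) * (σ i1) ^ 2 + K * σ i1) ≤ n * (σ i1) ^ 2 :=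
      mul_le_mul_of_nonneg_left hsum hn0.le
    have h3 : n * ((1 / n) * (σ i1) ^ 2) = (σ i1) ^ 2 := by
      field_simp
    nlinarith [hσpos]


end GraphSteklov
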